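/- arXiv:1802.01091 — 3 statements merged into one kernel-verified Lean document; each statement's English description precedes it below -/
import Mathlib

section
/- Let m ≥ 2 be an integer and let H be a graph with chromatic number χ(H) = r+1 > m. Then there exist a constant c > 0 and n₀ such that for all n ≥ n₀: ex(n, K_m, H) ≥ N(T_r(n), K_m) + c · biex(n,H) · n^{m−2}. -/
open SimpleGraph

/-- The number of copies of `T` in `G`, i.e. the number of subgraphs of `G` isomorphic to `T`. -/
noncomputable def copies {α β : Type*} (T : SimpleGraph α) (G : SimpleGraph β) : ℕ :=
  Nat.card {H : G.Subgraph // Nonempty (H.coe ≃g T)}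

/-- `G` contains no subgraph isomorphic to `T`. -/
def Free {α β : Type*} (T : SimpleGraph α) (G : SimpleGraph β) : Prop :=
  ∀ H : G.Subgraph, ¬ Nonempty (H.coe ≃g T)

/-- The generalized Turán number `ex(n, T, H)`: the maximum number of copies of `T`
in an `H`-free graph on `n` vertices. -/
noncomputable def genEx {α β : Type*} (n : ℕ) (T : SimpleGraph α) (H : SimpleGraph β) : ℕ :=
  sSup {k | ∃ G : SimpleGraph (Fin n), _root_.Free H G ∧ copies T G = k}

/-- `biex n H r`: maximum number of edges of an `n`-vertex graph containing no member of the
decomposition family of `H` (where `χ(H) = r+1`), i.e. no bipartite graph obtained from `H`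
by deleting `r-1` color classes of a proper `(r+1)`-coloring. -/
noncomputable def biex {W : Type*} (n : ℕ) (H : SimpleGraph W) (r : ℕ) : ℕ :=
  sSup {k | ∃ G : SimpleGraph (Fin n),
    (∀ (C : H.Coloring (Fin (r + 1))) (c₁ c₂ : Fin (r + 1)), c₁ ≠ c₂ →
      _root_.Free (SimpleGraph.induce {v | C v = c₁ ∨ C v = c₂} H) G) ∧
    Nat.card G.edgeSet = k}

namespace Stmt1


variable {α β γ : Type*}

def CopyIn (T : SimpleGraph α) (G : SimpleGraph β) : Prop :=
  ∃ f : α → β, Function.Injective f ∧ ∀ ⦃a b⦄, T.Adj a b → G.Adj (f a) (f b)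

lemma copyIn_of_subgraph_iso {T : SimpleGraph α} {G : SimpleGraph β} (K : G.Subgraph)
    (e : K.coe ≃g T) : CopyIn T G := by
  refine ⟨fun a => ((e.symm a : K.verts) : β), ?_, ?_⟩
  · intro a b h
    exact e.symm.injective (Subtype.val_injective h)
  · intro a b h
    have : K.coe.Adj (e.symm a) (e.symm b) := e.symm.map_rel_iff.mpr h
    exact K.adj_sub this

lemma not_free_of_copyIn {T : SimpleGraph α} {G : SimpleGraph β} (h : CopyIn T G) :
    ¬ _root_.Free T G := by
  obtain ⟨f, hinj, hadj⟩ := h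
  intro hfree
  refine hfree ⟨Set.range f, fun x y => ∃ a b, T.Adj a b ∧ f a = x ∧ f b = y, ?_, ?_, ?_⟩ ?_
  · rintro x y ⟨a, b, hab, rfl, rfl⟩
    exact hadj hab
  · rintro x y ⟨a, b, hab, rfl, rfl⟩
    exact ⟨a, rfl⟩
  · refine ⟨?_⟩; rintro x y ⟨a, b, hab, rfl, rfl⟩
    exact ⟨b, a, hab.symm, rfl, rfl⟩
  · refine ⟨RelIso.symm ⟨Equiv.ofInjective f hinj, ?_⟩⟩
    intro a b
    constructor
    · rintro ⟨a', b', hab, ha, hb⟩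
      rw [show a' = a from hinj ha, show b' = b from hinj hb] at hab
      exact hab
    · intro hab
      exact ⟨a, b, hab, rfl, rfl⟩

lemma free_iff_no_copy {T : SimpleGraph α} {G : SimpleGraph β} :
    _root_.Free T G ↔ ¬ CopyIn T G := by
  constructor
  · intro hfree hcopy
    exact not_free_of_copyIn hcopy hfree
  · intro h K
    rintro ⟨e⟩
    exact h (copyIn_of_subgraph_iso K e)

lemma copyIn_mono {T : SimpleGraph α} {G G' : SimpleGraph β} (hle : G ≤ G')
    (h : CopyIn T G) : CopyIn T G' := by
  obtain ⟨f, hinj, hadj⟩ := h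
  exact ⟨f, hinj, fun a b hab => hle (hadj hab)⟩

lemma free_anti {T : SimpleGraph α} {G G' : SimpleGraph β} (hle : G ≤ G')
    (h : _root_.Free T G') : _root_.Free T G := by
  rw [free_iff_no_copy] at h ⊢
  exact fun hc => h (copyIn_mono hle hc)

instance finite_subgraph {V : Type*} [Finite V] (G : SimpleGraph V) : Finite G.Subgraph := by
  have : Function.Injective (fun K : G.Subgraph => (K.verts, fun p : V × V => K.Adj p.1 p.2)) := by
    intro K L h
    simp only [Prod.mk.injEq] at h
    ext x y
    · exact Set.ext_iff.mp h.1 x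
    · exact iff_of_eq (congrFun h.2 (x, y))
  exact Finite.of_injective _ this



variable {n : ℕ}

open Classical in
noncomputable def pairs (G : SimpleGraph (Fin n)) : Finset (Fin n × Fin n) :=
  Finset.univ.filter (fun p => G.Adj p.1 p.2 ∧ p.1 < p.2)

open Classical in
lemma nat_card_subtype {V : Type*} [Fintype V] (p : V → Prop) :
    Nat.card {x // p x} = (Finset.univ.filter p).card := by
  rw [Nat.card_eq_fintype_card, Fintype.card_subtype]

lemma mem_pairs {G : SimpleGraph (Fin n)} {p : Fin n × Fin n} :
    p ∈ pairs G ↔ G.Adj p.1 p.2 ∧ p.1 < p.2 := by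
  classical
  unfold pairs
  rw [Finset.mem_filter]
  exact ⟨fun h => h.2, fun h => ⟨Finset.mem_univ _, h⟩⟩

lemma card_edgeSet_eq_pairs (G : SimpleGraph (Fin n)) :
    Nat.card G.edgeSet = (pairs G).card := by
  classical
  have h1 : Nat.card G.edgeSet
      = Nat.card {p : Fin n × Fin n // G.Adj p.1 p.2 ∧ p.1 < p.2} := by
    apply Nat.card_congr
    apply Equiv.symm
    refine Equiv.ofBijective (fun p => ⟨s(p.1.1, p.1.2), p.2.1⟩) ⟨?_, ?_⟩
    · rintro ⟨⟨a, b⟩, hab, hlt⟩ ⟨⟨c, d⟩, hcd, hlt'⟩ h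
      simp only [Subtype.mk.injEq, Sym2.eq_iff] at h
      rcases Sym2.eq_iff.mp (congrArg Subtype.val h) with ⟨rfl, rfl⟩ | ⟨rfl, rfl⟩
      · rfl
      · exact absurd (hlt.trans hlt') (lt_irrefl _)
    · rintro ⟨e, he⟩
      induction e with
      | _ a b =>
        have hadj : G.Adj a b := he
        rcases lt_trichotomy a b with h | h | h
        · exact ⟨⟨(a, b), hadj, h⟩, rfl⟩
        · exact absurd hadj (h ▸ G.irrefl)
        · exact ⟨⟨(b, a), hadj.symm, h⟩, Subtype.ext (Sym2.eq_swap)⟩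
  rw [h1, nat_card_subtype]
  unfold pairs
  congr 1
  ext p
  simp [Finset.mem_filter]

lemma cut_sets_card {a b : Fin n} (hab : a ≠ b) :
    (Finset.univ.filter (fun s : Finset (Fin n) => (a ∈ s ↔ b ∉ s))).card = 2 ^ (n - 1) := by
  classical
  have hn : 0 < n := by
    rcases Nat.eq_zero_or_pos n with h | h
    · have := a.isLt; omega
    · exact h
  set CUT := Finset.univ.filter (fun s : Finset (Fin n) => (a ∈ s ↔ b ∉ s)) with hCUT
  set NCUT := Finset.univ.filter (fun s : Finset (Fin n) => ¬(a ∈ s ↔ b ∉ s)) with hNCUT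
  have hsum : CUT.card + NCUT.card = 2 ^ n := by
    rw [hCUT, hNCUT, Finset.card_filter_add_card_filter_not]
    simp [Fintype.card_finset]
  have hbij : CUT.card = NCUT.card := by
    refine Finset.card_bij' (fun s _ => if b ∈ s then s.erase b else insert b s)
      (fun s _ => if b ∈ s then s.erase b else insert b s) ?_ ?_ ?_ ?_
    · intro s hs
      simp only [hCUT, Finset.mem_filter, Finset.mem_univ, true_and] at hs
      simp only [hNCUT, Finset.mem_filter, Finset.mem_univ, true_and]
      by_cases hb : b ∈ s
      · have ha : a ∉ s := fun ha => (hs.mp ha) hb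
        simp [hb, Finset.mem_erase, hab, ha]
      · have ha : a ∈ s := hs.mpr hb
        simp [hb, Finset.mem_insert, ha, hab]
    · intro s hs
      simp only [hNCUT, Finset.mem_filter, Finset.mem_univ, true_and] at hs
      simp only [hCUT, Finset.mem_filter, Finset.mem_univ, true_and]
      by_cases hb : b ∈ s <;> by_cases ha : a ∈ s
      · simp [hb, ha, Finset.mem_erase, hab]
      · exact absurd (by tauto) hs
      · exact absurd (by tauto) hs
      · simp [hb, ha, Finset.mem_insert, hab]
    · intro s hs
      by_cases hb : b ∈ s
      · simp [hb, Finset.insert_erase, Finset.mem_erase]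
      · simp [hb, Finset.erase_insert, Finset.mem_insert]
    · intro s hs
      by_cases hb : b ∈ s
      · simp [hb, Finset.insert_erase, Finset.mem_erase]
      · simp [hb, Finset.erase_insert, Finset.mem_insert]
  have h2 : 2 * 2 ^ (n - 1) = 2 ^ n := by
    rw [← pow_succ']
    congr 1
    omega
  omega

lemma exists_maxcut (B : SimpleGraph (Fin n)) :
    ∃ s : Finset (Fin n),
      (pairs B).card ≤ 2 * ((pairs B).filter (fun p => (p.1 ∈ s ↔ p.2 ∉ s))).card := by
  classical
  by_contra hcon
  push_neg at hcon
  have hE : 1 ≤ (pairs B).card := by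
    rcases Nat.eq_zero_or_pos (pairs B).card with h | h
    · have := hcon ∅
      omega
    · exact h
  have hn : 0 < n := by
    rcases Nat.eq_zero_or_pos n with h | h
    · have : (pairs B).card = 0 := by
        subst h
        have : pairs B = ∅ := Finset.eq_empty_of_forall_notMem (fun p _ => p.1.elim0)
        simp [this]
      omega
    · exact h
  have hkey : ∑ s : Finset (Fin n), ((pairs B).filter (fun p => (p.1 ∈ s ↔ p.2 ∉ s))).card
      = (pairs B).card * 2 ^ (n - 1) := by
    have heq : ∀ s : Finset (Fin n), ((pairs B).filter (fun p => (p.1 ∈ s ↔ p.2 ∉ s))).card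
        = ∑ p ∈ pairs B, if (p.1 ∈ s ↔ p.2 ∉ s) then 1 else 0 := by
      intro s; rw [Finset.card_filter]
    simp_rw [heq]
    rw [Finset.sum_comm]
    have heq2 : ∀ p ∈ pairs B, (∑ s : Finset (Fin n), if (p.1 ∈ s ↔ p.2 ∉ s) then 1 else 0)
        = 2 ^ (n - 1) := by
      intro p hp
      rw [← Finset.card_filter]
      exact cut_sets_card (mem_pairs.mp hp).2.ne
    rw [Finset.sum_congr rfl heq2, Finset.sum_const, smul_eq_mul]
  have hub : ∑ s : Finset (Fin n), ((pairs B).filter (fun p => (p.1 ∈ s ↔ p.2 ∉ s))).card * 2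
      ≤ ∑ s : Finset (Fin n), ((pairs B).card - 1) := by
    apply Finset.sum_le_sum
    intro s _
    have := hcon s
    omega
  rw [← Finset.sum_mul, hkey, Finset.sum_const, smul_eq_mul] at hub
  rw [Finset.card_univ, Fintype.card_finset, Fintype.card_fin] at hub
  have h2 : (2:ℕ) ^ n = 2 ^ (n-1) * 2 := by
    rw [← pow_succ]; congr 1; omega
  rw [h2] at hub
  have hpos : 0 < 2 ^ (n-1) := Nat.pow_pos (by norm_num)
  set T := 2 ^ (n-1) with hT
  set E := (pairs B).card with hEdef
  zify [hE] at hub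
  have hpos' : (0:ℤ) < (T:ℤ) := by exact_mod_cast hpos
  have hE' : (1:ℤ) ≤ (E:ℤ) := by exact_mod_cast hE
  nlinarith [hub, hpos', hE']


lemma exists_fiber (K : ℕ) (hK : 0 < K) (s : Finset (Fin n)) (B' : SimpleGraph (Fin n))
    (hcut : ∀ ⦃x y⦄, B'.Adj x y → (x ∈ s ↔ y ∉ s)) :
    ∃ i j : ℕ, i < K ∧ j < K ∧ ∃ B'' : SimpleGraph (Fin n), B'' ≤ B' ∧
      (∀ ⦃x y⦄, B''.Adj x y →
        ((x ∈ s ∧ (x:ℕ) % K = i ∧ y ∉ s ∧ (y:ℕ) % K = j) ∨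
         (y ∈ s ∧ (y:ℕ) % K = i ∧ x ∉ s ∧ (x:ℕ) % K = j))) ∧
      (pairs B').card ≤ K * K * (pairs B'').card := by
  classical
  set σ : Fin n × Fin n → ℕ × ℕ :=
    fun p => if p.1 ∈ s then ((p.1 : ℕ) % K, (p.2 : ℕ) % K)
      else ((p.2 : ℕ) % K, (p.1 : ℕ) % K) with hσ
  set tgt : Finset (ℕ × ℕ) := (Finset.range K) ×ˢ (Finset.range K) with htgt
  have hmaps : ∀ p ∈ pairs B', σ p ∈ tgt := by
    intro p hp
    by_cases h1 : p.1 ∈ s <;>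
      simp [hσ, htgt, Finset.mem_product, Finset.mem_range, h1, Nat.mod_lt _ hK]
  obtain ⟨ij, hijmem, hmax⟩ := Finset.exists_max_image tgt
    (fun ij => ((pairs B').filter (fun p => σ p = ij)).card)
    ⟨(0, 0), by simp [htgt, Finset.mem_product, Finset.mem_range, hK]⟩
  obtain ⟨i, j⟩ := ij
  have hi : i < K := by
    rw [htgt, Finset.mem_product, Finset.mem_range, Finset.mem_range] at hijmem
    exact hijmem.1
  have hj : j < K := by
    rw [htgt, Finset.mem_product, Finset.mem_range, Finset.mem_range] at hijmem
    exact hijmem.2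
  refine ⟨i, j, hi, hj, ?_⟩
  set B'' : SimpleGraph (Fin n) :=
    { Adj := fun x y => B'.Adj x y ∧
        ((x ∈ s ∧ (x:ℕ) % K = i ∧ y ∉ s ∧ (y:ℕ) % K = j) ∨
         (y ∈ s ∧ (y:ℕ) % K = i ∧ x ∉ s ∧ (x:ℕ) % K = j)),
      symm := by
        refine ⟨fun x y h => ?_⟩
        exact ⟨h.1.symm, h.2.symm⟩
      loopless := by
        refine ⟨fun x h => ?_⟩
        exact B'.irrefl h.1 } with hB''
  have hle : B'' ≤ B' := fun x y h => h.1
  have hprop : ∀ ⦃x y⦄, B''.Adj x y →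
      ((x ∈ s ∧ (x:ℕ) % K = i ∧ y ∉ s ∧ (y:ℕ) % K = j) ∨
       (y ∈ s ∧ (y:ℕ) % K = i ∧ x ∉ s ∧ (x:ℕ) % K = j)) := fun x y h => h.2
  refine ⟨B'', hle, hprop, ?_⟩
  have hsub : (pairs B').filter (fun p => σ p = (i, j)) ⊆ pairs B'' := by
    intro p hp
    rw [Finset.mem_filter] at hp
    obtain ⟨hp1, hp2⟩ := hp
    rw [mem_pairs] at hp1 ⊢
    obtain ⟨hadj, hlt⟩ := hp1
    refine ⟨⟨hadj, ?_⟩, hlt⟩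
    by_cases h1 : p.1 ∈ s
    · have h2 : p.2 ∉ s := (hcut hadj).mp h1
      rw [hσ] at hp2
      simp only [h1, if_pos] at hp2
      left
      exact ⟨h1, (Prod.mk.injEq _ _ _ _ ▸ hp2).1, h2, (Prod.mk.injEq _ _ _ _ ▸ hp2).2⟩
    · have h2 : p.2 ∈ s := by
        by_contra h2
        exact h1 ((hcut hadj).mpr h2)
      rw [hσ] at hp2
      simp only [h1, if_neg, not_false_iff] at hp2
      right
      exact ⟨h2, (Prod.mk.injEq _ _ _ _ ▸ hp2).1, h1, (Prod.mk.injEq _ _ _ _ ▸ hp2).2⟩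
  calc (pairs B').card = ∑ ij ∈ tgt, ((pairs B').filter (fun p => σ p = ij)).card :=
        Finset.card_eq_sum_card_fiberwise hmaps
    _ ≤ tgt.card * ((pairs B').filter (fun p => σ p = (i, j))).card := by
        rw [← smul_eq_mul]
        exact Finset.sum_le_card_nsmul _ _ _ (fun ij h => hmax ij h)
    _ ≤ K * K * (pairs B'').card := by
        rw [htgt, Finset.card_product, Finset.card_range]
        exact Nat.mul_le_mul le_rfl (Finset.card_le_card hsub)

lemma exists_perm_into (A C : Finset (Fin n)) (h : A.card ≤ C.card) :
    ∃ π : Equiv.Perm (Fin n), ∀ a ∈ A, π a ∈ C := by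
  classical
  have hcard : Fintype.card {x // x ∈ A} ≤ Fintype.card {x // x ∈ C} := by
    simpa [Fintype.card_coe] using h
  obtain ⟨emb⟩ := Function.Embedding.nonempty_of_card_le hcard
  set f : {y // y ∈ A} → Fin n := fun x => ((emb x : {y // y ∈ C}) : Fin n) with hf
  have hinj : Function.Injective f := by
    intro a b hab
    exact emb.injective (Subtype.val_injective hab)
  set T : Finset (Fin n) := Finset.univ.image f with hT
  have hTsub : ∀ v ∈ T, v ∈ C := by
    intro v hv
    rw [hT, Finset.mem_image] at hv
    obtain ⟨x, _, rfl⟩ := hv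
    exact (emb x).2
  have hcardT : T.card = A.card := by
    rw [hT, Finset.card_image_of_injective _ hinj, Finset.card_univ, Fintype.card_coe]
  have hmemT : ∀ x : {y // y ∈ A}, f x ∈ T := by
    intro x
    rw [hT, Finset.mem_image]
    exact ⟨x, Finset.mem_univ _, rfl⟩
  have e₁ : {x // x ∈ A} ≃ {x // x ∈ T} := by
    refine Equiv.ofBijective (fun x => ⟨f x, hmemT x⟩) ⟨?_, ?_⟩
    · intro a b hab
      have := congrArg (fun z : {x // x ∈ T} => (z : Fin n)) hab
      exact hinj this
    · rintro ⟨v, hv⟩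
      rw [hT, Finset.mem_image] at hv
      obtain ⟨x, _, rfl⟩ := hv
      exact ⟨x, rfl⟩
  have e₂ : {x : Fin n // ¬ x ∈ A} ≃ {x : Fin n // ¬ x ∈ T} := by
    apply Fintype.equivOfCardEq
    rw [Fintype.card_subtype_compl, Fintype.card_subtype_compl]
    have h1 : Fintype.card {x // x ∈ A} = A.card := Fintype.card_coe A
    have h2 : Fintype.card {x // x ∈ T} = T.card := Fintype.card_coe T
    rw [h1, h2, hcardT]
  refine ⟨Equiv.subtypeCongr e₁ e₂, ?_⟩
  intro a ha
  have heval : Equiv.subtypeCongr e₁ e₂ a = ↑(e₁ ⟨a, ha⟩) := by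
    simp [Equiv.subtypeCongr, Equiv.sumCompl_symm_apply_of_pos ha]
  rw [heval]
  exact hTsub _ (e₁ ⟨a, ha⟩).2




variable {W : Type*} [Fintype W]

lemma member_edge {r : ℕ} {H : SimpleGraph W} (hr : 0 < r)
    (hχ : H.chromaticNumber = (r + 1 : ℕ))
    (C : H.Coloring (Fin (r + 1))) {c₁ c₂ : Fin (r + 1)} (hne : c₁ ≠ c₂) :
    ∃ u v : W, H.Adj u v ∧ (C u = c₁ ∨ C u = c₂) ∧ (C v = c₁ ∨ C v = c₂) := by
  by_contra hcon
  push_neg at hcon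
  set col : W → Fin (r + 1) := fun v => if C v = c₂ then c₁ else C v with hcol
  have hcol_ne : ∀ v, col v ≠ c₂ := by
    intro v
    rw [hcol]
    by_cases hv : C v = c₂ <;> simp [hv, hne]
  have hvalid : ∀ {u v}, H.Adj u v → col u ≠ col v := by
    intro u v huv
    have hCuv : C u ≠ C v := C.valid huv
    rw [hcol]
    by_cases hu : C u = c₂ <;> by_cases hv : C v = c₂ <;> simp only [hu, hv, if_pos, if_neg,
      if_true, if_false]
    · exact absurd (hu.trans hv.symm) hCuv
    · intro heq
      exact (hcon u v huv (Or.inr hu)).1 heq.symm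
    · intro heq
      exact (hcon u v huv (Or.inl heq)).2 hv
    · exact hCuv
  have hc₂le : (c₂ : ℕ) ≤ r := by have := c₂.isLt; omega
  set g : Fin (r + 1) → Fin r := fun x =>
    if h : (x : ℕ) < (c₂ : ℕ) then ⟨(x : ℕ), by omega⟩
    else ⟨(x : ℕ) - 1, by have := x.isLt; omega⟩ with hg
  have hginj : ∀ x y : Fin (r + 1), x ≠ c₂ → y ≠ c₂ → x ≠ y → g x ≠ g y := by
    intro x y hx hy hxy
    have hx' : (x : ℕ) ≠ (c₂ : ℕ) := fun h => hx (Fin.ext h)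
    have hy' : (y : ℕ) ≠ (c₂ : ℕ) := fun h => hy (Fin.ext h)
    have hxy' : (x : ℕ) ≠ (y : ℕ) := fun h => hxy (Fin.ext h)
    rcases Nat.lt_or_ge (x : ℕ) (c₂ : ℕ) with h1 | h1 <;>
      rcases Nat.lt_or_ge (y : ℕ) (c₂ : ℕ) with h2 | h2
    · simp only [hg]; rw [dif_pos h1, dif_pos h2]; intro hc; rw [Fin.mk.injEq] at hc; omega
    · simp only [hg]; rw [dif_pos h1, dif_neg (by omega)]; intro hc; rw [Fin.mk.injEq] at hc; omega
    · simp only [hg]; rw [dif_neg (by omega), dif_pos h2]; intro hc; rw [Fin.mk.injEq] at hc; omega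
    · simp only [hg]; rw [dif_neg (by omega), dif_neg (by omega)]; intro hc; rw [Fin.mk.injEq] at hc; omega
  have hcolorable : H.Colorable r := by
    refine ⟨Coloring.mk (fun v => g (col v)) ?_⟩
    intro u v huv
    exact hginj _ _ (hcol_ne u) (hcol_ne v) (hvalid huv)
  have := hcolorable.chromaticNumber_le
  rw [hχ] at this
  have : (r + 1 : ℕ) ≤ r := by exact_mod_cast this
  omega

lemma biex_attained (n : ℕ) {r : ℕ} {H : SimpleGraph W} (hr : 0 < r)
    (hχ : H.chromaticNumber = (r + 1 : ℕ)) :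
    ∃ B : SimpleGraph (Fin n),
      (∀ (C : H.Coloring (Fin (r + 1))) (c₁ c₂ : Fin (r + 1)), c₁ ≠ c₂ →
        _root_.Free (SimpleGraph.induce {v | C v = c₁ ∨ C v = c₂} H) B) ∧
      Nat.card B.edgeSet = biex n H r := by
  have hne : {k | ∃ G : SimpleGraph (Fin n),
      (∀ (C : H.Coloring (Fin (r + 1))) (c₁ c₂ : Fin (r + 1)), c₁ ≠ c₂ →
        _root_.Free (SimpleGraph.induce {v | C v = c₁ ∨ C v = c₂} H) G) ∧
      Nat.card G.edgeSet = k}.Nonempty := by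
    refine ⟨0, ⊥, ?_, ?_⟩
    · intro C c₁ c₂ hc
      intro K
      rintro ⟨e⟩
      obtain ⟨u, v, huv, hu, hv⟩ := member_edge hr hχ C hc
      -- copy of member in ⊥ gives an edge in ⊥
      have hadj : (SimpleGraph.induce {v | C v = c₁ ∨ C v = c₂} H).Adj ⟨u, hu⟩ ⟨v, hv⟩ := huv
      have : K.coe.Adj (e.symm ⟨u, hu⟩) (e.symm ⟨v, hv⟩) := e.symm.map_rel_iff.mpr hadj
      have : (⊥ : SimpleGraph (Fin n)).Adj _ _ := K.adj_sub this
      simp at this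
    · rw [SimpleGraph.edgeSet_bot]
      simp
  have hbdd : BddAbove {k | ∃ G : SimpleGraph (Fin n),
      (∀ (C : H.Coloring (Fin (r + 1))) (c₁ c₂ : Fin (r + 1)), c₁ ≠ c₂ →
        _root_.Free (SimpleGraph.induce {v | C v = c₁ ∨ C v = c₂} H) G) ∧
      Nat.card G.edgeSet = k} := by
    refine ⟨Nat.card (Sym2 (Fin n)), ?_⟩
    rintro k ⟨G, -, rfl⟩
    exact Nat.card_le_card_of_injective _ Subtype.val_injective
  obtain ⟨B, hB1, hB2⟩ := Nat.sSup_mem hne hbdd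
  exact ⟨B, hB1, hB2⟩


lemma pairs_card_map (B'' : SimpleGraph (Fin n)) (π : Equiv.Perm (Fin n)) :
    (pairs B'').card ≤ (pairs (SimpleGraph.map π.toEmbedding B'')).card := by
  classical
  apply Finset.card_le_card_of_injOn
    (fun p => if π p.1 < π p.2 then (π p.1, π p.2) else (π p.2, π p.1))
  · intro p hp
    simp only [Finset.mem_coe] at hp ⊢
    rw [mem_pairs] at hp
    have hadj : (SimpleGraph.map π.toEmbedding B'').Adj (π p.1) (π p.2) :=
      (SimpleGraph.map_adj _ _ _ _).mpr ⟨p.1, p.2, hp.1, by simp, by simp⟩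
    have hne : π p.1 ≠ π p.2 := fun h => (hp.2.ne (π.injective h)).elim
    by_cases h : π p.1 < π p.2
    · rw [if_pos h, mem_pairs]
      exact ⟨hadj, h⟩
    · rw [if_neg h, mem_pairs]
      exact ⟨hadj.symm, lt_of_le_of_ne (not_lt.mp h) (Ne.symm hne)⟩
  · intro p hp q hq hpq
    rw [Finset.mem_coe, mem_pairs] at hp hq
    simp only [] at hpq
    by_cases h1 : π p.1 < π p.2 <;> by_cases h2 : π q.1 < π q.2
    · rw [if_pos h1, if_pos h2, Prod.mk.injEq] at hpq
      exact Prod.ext (π.injective hpq.1) (π.injective hpq.2)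
    · rw [if_pos h1, if_neg h2, Prod.mk.injEq] at hpq
      have ha : p.1 = q.2 := π.injective hpq.1
      have hb : p.2 = q.1 := π.injective hpq.2
      exfalso
      have h3 := hp.2
      rw [ha, hb] at h3
      exact absurd (h3.trans hq.2) (lt_irrefl _)
    · rw [if_neg h1, if_pos h2, Prod.mk.injEq] at hpq
      have ha : p.2 = q.1 := π.injective hpq.1
      have hb : p.1 = q.2 := π.injective hpq.2
      exfalso
      have h4 := hq.2
      rw [← ha, ← hb] at h4
      exact absurd (hp.2.trans h4) (lt_irrefl _)
    · rw [if_neg h1, if_neg h2, Prod.mk.injEq] at hpq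
      exact Prod.ext (π.injective hpq.2) (π.injective hpq.1)


lemma count_lemma {r m : ℕ} (hm : 2 ≤ m) (hmr : m ≤ r)
    (B₁ : SimpleGraph (Fin n))
    (h0 : ∀ ⦃x y⦄, B₁.Adj x y → (x : ℕ) % r = 0 ∧ (y : ℕ) % r = 0) :
    copies (⊤ : SimpleGraph (Fin m)) (turanGraph n r)
      + (pairs B₁).card * Nat.card (∀ i : Fin (m - 2), {v : Fin n // (v : ℕ) % r = (i : ℕ) + 1})
      ≤ copies (⊤ : SimpleGraph (Fin m)) (turanGraph n r ⊔ B₁) := by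
  classical
  have hr : 0 < r := by omega
  set G := turanGraph n r ⊔ B₁ with hG
  set Pi2 := ∀ i : Fin (m - 2), {v : Fin n // (v : ℕ) % r = (i : ℕ) + 1} with hPi2
  set Pr := {p : Fin n × Fin n // p ∈ pairs B₁} with hPr
  set Dom1 := {KK : (turanGraph n r).Subgraph //
    Nonempty (KK.coe ≃g (⊤ : SimpleGraph (Fin m)))} with hDom1
  set Dom2 := Pr × Pi2 with hDom2
  set Tgt := {KK : G.Subgraph // Nonempty (KK.coe ≃g (⊤ : SimpleGraph (Fin m)))} with hTgt
  -- basic facts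
  have hadjp : ∀ pw : Dom2, B₁.Adj pw.1.1.1 pw.1.1.2 ∧ pw.1.1.1 < pw.1.1.2 :=
    fun pw => mem_pairs.mp pw.1.2
  have hres0 : ∀ pw : Dom2, ((pw.1.1.1 : ℕ) % r = 0) ∧ ((pw.1.1.2 : ℕ) % r = 0) :=
    fun pw => h0 (hadjp pw).1
  have hwlt : ∀ i : Fin (m - 2), (i : ℕ) + 1 < r := by
    intro i
    have := i.isLt
    omega
  set Sset : Dom2 → Set (Fin n) :=
    fun pw => {pw.1.1.1, pw.1.1.2} ∪ Set.range (fun i => (pw.2 i : Fin n)) with hSset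
  have hSmem : ∀ (pw : Dom2) (x : Fin n), x ∈ Sset pw ↔
      (x = pw.1.1.1 ∨ x = pw.1.1.2 ∨ ∃ i, (pw.2 i : Fin n) = x) := by
    intro pw x
    simp only [hSset, Set.mem_union, Set.mem_insert_iff, Set.mem_singleton_iff, Set.mem_range]
    tauto
  have hSres : ∀ (pw : Dom2) (x : Fin n), x ∈ Sset pw →
      (((x : ℕ) % r = 0) ∧ (x = pw.1.1.1 ∨ x = pw.1.1.2)) ∨
      (∃ i : Fin (m - 2), (pw.2 i : Fin n) = x ∧ (x : ℕ) % r = (i : ℕ) + 1) := by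
    intro pw x hx
    rcases (hSmem pw x).mp hx with h | h | ⟨i, h⟩
    · exact Or.inl ⟨h ▸ (hres0 pw).1, Or.inl h⟩
    · exact Or.inl ⟨h ▸ (hres0 pw).2, Or.inr h⟩
    · exact Or.inr ⟨i, h, h ▸ (pw.2 i).2⟩
  have hTadj : ∀ {x y : Fin n}, (x : ℕ) % r ≠ (y : ℕ) % r → G.Adj x y := by
    intro x y hxy
    rw [hG, sup_adj]
    exact Or.inl hxy
  have hBadj : ∀ {x y : Fin n}, B₁.Adj x y → G.Adj x y := by
    intro x y hxy
    rw [hG, sup_adj]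
    exact Or.inr hxy
  have hGadj : ∀ (pw : Dom2) {x y : Fin n}, x ≠ y → x ∈ Sset pw → y ∈ Sset pw → G.Adj x y := by
    intro pw x y hne hx hy
    rcases hSres pw x hx with ⟨hx0, hxc⟩ | ⟨i, hix, hxi⟩ <;>
      rcases hSres pw y hy with ⟨hy0, hyc⟩ | ⟨j, hjy, hyj⟩
    · rcases hxc with rfl | rfl <;> rcases hyc with rfl | rfl
      · exact absurd rfl hne
      · exact hBadj (hadjp pw).1
      · exact hBadj (hadjp pw).1.symm
      · exact absurd rfl hne
    · exact hTadj (by omega)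
    · exact hTadj (by omega)
    · have hij : (i : ℕ) ≠ (j : ℕ) := by
        intro he
        apply hne
        rw [← hix, ← hjy, Fin.ext he]
      exact hTadj (by omega)
  -- the two injections
  set liftSub : (turanGraph n r).Subgraph → G.Subgraph :=
    fun KK => ⟨KK.verts, KK.Adj, fun hab => hTadj (KK.adj_sub hab),
      fun hab => KK.edge_vert hab, KK.symm⟩ with hlift
  set ΦRsub : Dom2 → G.Subgraph :=
    fun pw => ⟨Sset pw, fun x y => x ≠ y ∧ x ∈ Sset pw ∧ y ∈ Sset pw,
      fun hab => hGadj pw hab.1 hab.2.1 hab.2.2,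
      fun hab => hab.2.1,
      ⟨fun x y hab => ⟨hab.1.symm, hab.2.2, hab.2.1⟩⟩⟩ with hΦR
  -- iso for the right part
  have hRiso : ∀ pw : Dom2, Nonempty ((ΦRsub pw).coe ≃g (⊤ : SimpleGraph (Fin m))) := by
    intro pw
    set gfun : Fin m → Fin n := fun k =>
      if h1 : (k : ℕ) = 0 then pw.1.1.1
      else if h2 : (k : ℕ) = 1 then pw.1.1.2
      else (pw.2 ⟨(k : ℕ) - 2, by have := k.isLt; omega⟩ : Fin n) with hgfun
    have hg0 : ∀ k : Fin m, (k : ℕ) = 0 → gfun k = pw.1.1.1 := by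
      intro k hk
      simp only [hgfun]
      rw [dif_pos hk]
    have hg1 : ∀ k : Fin m, (k : ℕ) = 1 → gfun k = pw.1.1.2 := by
      intro k hk
      simp only [hgfun]
      rw [dif_neg (by omega), dif_pos hk]
    have hg2 : ∀ (k : Fin m), 2 ≤ (k : ℕ) →
        ∃ i : Fin (m - 2), (i : ℕ) = (k : ℕ) - 2 ∧ gfun k = (pw.2 i : Fin n) := by
      intro k hk
      refine ⟨⟨(k : ℕ) - 2, by have := k.isLt; omega⟩, rfl, ?_⟩
      simp only [hgfun]
      rw [dif_neg (by omega), dif_neg (by omega)]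
    have hgres : ∀ k : Fin m, ((gfun k : ℕ) % r) = if (k : ℕ) ≤ 1 then 0 else (k : ℕ) - 1 := by
      intro k
      rcases Nat.lt_or_ge (k : ℕ) 2 with hk | hk
      · rcases Nat.lt_or_ge (k : ℕ) 1 with hk1 | hk1
        · rw [hg0 k (by omega), if_pos (by omega)]
          exact (hres0 pw).1
        · rw [hg1 k (by omega), if_pos (by omega)]
          exact (hres0 pw).2
      · obtain ⟨i, hi, hgi⟩ := hg2 k hk
        rw [hgi, if_neg (by omega), (pw.2 i).2, hi]
        omega
    have hgmem : ∀ k : Fin m, gfun k ∈ Sset pw := by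
      intro k
      rw [hSmem]
      rcases Nat.lt_or_ge (k : ℕ) 2 with hk | hk
      · rcases Nat.lt_or_ge (k : ℕ) 1 with hk1 | hk1
        · exact Or.inl (hg0 k (by omega))
        · exact Or.inr (Or.inl (hg1 k (by omega)))
      · obtain ⟨i, _, hgi⟩ := hg2 k hk
        exact Or.inr (Or.inr ⟨i, hgi.symm⟩)
    have hginj : Function.Injective gfun := by
      intro k k' he
      have hre : ((gfun k : ℕ) % r) = ((gfun k' : ℕ) % r) := by rw [he]
      rw [hgres, hgres] at hre
      apply Fin.ext
      rcases Nat.lt_or_ge (k : ℕ) 2 with hk | hk <;> rcases Nat.lt_or_ge (k' : ℕ) 2 with hk' | hk'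
      · -- both small
        rcases Nat.lt_or_ge (k : ℕ) 1 with h1 | h1 <;> rcases Nat.lt_or_ge (k' : ℕ) 1 with h2 | h2
        · omega
        · rw [hg0 k (by omega), hg1 k' (by omega)] at he
          exact absurd he (hadjp pw).2.ne
        · rw [hg1 k (by omega), hg0 k' (by omega)] at he
          exact absurd he.symm (hadjp pw).2.ne
        · omega
      · rw [if_pos (by omega), if_neg (by omega)] at hre
        omega
      · rw [if_neg (by omega), if_pos (by omega)] at hre
        omega
      · rw [if_neg (by omega), if_neg (by omega)] at hre
        omega
    have hgsurj : ∀ x : Fin n, x ∈ Sset pw → ∃ k : Fin m, gfun k = x := by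
      intro x hx
      rcases (hSmem pw x).mp hx with h | h | ⟨i, h⟩
      · exact ⟨⟨0, by omega⟩, by rw [hg0 ⟨0, by omega⟩ rfl, h]⟩
      · exact ⟨⟨1, by omega⟩, by rw [hg1 ⟨1, by omega⟩ rfl, h]⟩
      · refine ⟨⟨(i : ℕ) + 2, by have := i.isLt; omega⟩, ?_⟩
        obtain ⟨i', hi', hgi⟩ := hg2 ⟨(i : ℕ) + 2, by have := i.isLt; omega⟩ (by simp)
        have hii : i' = i := by
          apply Fin.ext
          simp at hi'
          omega
        rw [hgi, hii, h]
    have hbij : Function.Bijective (fun k : Fin m => (⟨gfun k, hgmem k⟩ : (Sset pw))) := by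
      constructor
      · intro a b hab
        exact hginj (congrArg Subtype.val hab)
      · rintro ⟨x, hx⟩
        obtain ⟨k, hk⟩ := hgsurj x hx
        exact ⟨k, Subtype.ext hk⟩
    set e₀ : Fin m ≃ (Sset pw) :=
      Equiv.ofBijective (fun k : Fin m => (⟨gfun k, hgmem k⟩ : (Sset pw))) hbij with he₀
    refine ⟨⟨e₀.symm, ?_⟩⟩
    intro a b
    rw [top_adj]
    have h1 : (e₀.symm a = e₀.symm b) ↔ a = b := e₀.symm.injective.eq_iff
    have h2 : ((ΦRsub pw).coe.Adj a b) ↔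
        ((a : Fin n) ≠ (b : Fin n) ∧ (a : Fin n) ∈ Sset pw ∧ (b : Fin n) ∈ Sset pw) := Iff.rfl
    rw [h2]
    constructor
    · intro hne
      refine ⟨fun hv => hne (h1.mpr (Subtype.ext hv) ▸ rfl), a.2, b.2⟩
    · intro hh hv
      exact hh.1 (congrArg Subtype.val (h1.mp hv))
  -- the injection
  set Φ : Dom1 ⊕ Dom2 → Tgt := Sum.elim
    (fun KK => ⟨liftSub KK.1, KK.2⟩)
    (fun pw => ⟨ΦRsub pw, hRiso pw⟩) with hΦ
  have hΦinj : Function.Injective Φ := by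
    intro z z' h
    rcases z with KK | pw <;> rcases z' with KK' | pw'
    · simp only [hΦ, Sum.elim_inl] at h
      have h' : liftSub KK.1 = liftSub KK'.1 := congrArg Subtype.val h
      simp only [hlift, Subgraph.mk.injEq] at h'
      congr 1
      exact Subtype.ext (SimpleGraph.Subgraph.ext h'.1 h'.2)
    · exfalso
      simp only [hΦ, Sum.elim_inl, Sum.elim_inr] at h
      have h' : liftSub KK.1 = ΦRsub pw' := congrArg Subtype.val h
      simp only [hlift, hΦR, Subgraph.mk.injEq] at h'
      have hadj' : KK.1.Adj pw'.1.1.1 pw'.1.1.2 := by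
        have hfe := congrFun (congrFun h'.2 pw'.1.1.1) pw'.1.1.2
        rw [hfe]
        exact ⟨(hadjp pw').2.ne, (hSmem pw' _).mpr (Or.inl rfl),
          (hSmem pw' _).mpr (Or.inr (Or.inl rfl))⟩
      have := KK.1.adj_sub hadj'
      exact this ((hres0 pw').1.trans (hres0 pw').2.symm)
    · exfalso
      simp only [hΦ, Sum.elim_inl, Sum.elim_inr] at h
      have h' : ΦRsub pw = liftSub KK'.1 := congrArg Subtype.val h
      simp only [hlift, hΦR, Subgraph.mk.injEq] at h'
      have hadj' : KK'.1.Adj pw.1.1.1 pw.1.1.2 := by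
        have hfe := congrFun (congrFun h'.2 pw.1.1.1) pw.1.1.2
        rw [← hfe]
        exact ⟨(hadjp pw).2.ne, (hSmem pw _).mpr (Or.inl rfl),
          (hSmem pw _).mpr (Or.inr (Or.inl rfl))⟩
      have := KK'.1.adj_sub hadj'
      exact this ((hres0 pw).1.trans (hres0 pw).2.symm)
    · simp only [hΦ, Sum.elim_inr] at h
      have h' : ΦRsub pw = ΦRsub pw' := congrArg Subtype.val h
      simp only [hΦR, Subgraph.mk.injEq] at h'
      have hV : Sset pw = Sset pw' := h'.1
      have hmaj : ∀ x : Fin n, (x : ℕ) % r = 0 → x ∈ Sset pw' →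
          (x = pw'.1.1.1 ∨ x = pw'.1.1.2) := by
        intro x hx hmem
        rcases hSres pw' x hmem with ⟨_, hc⟩ | ⟨i, _, hres⟩
        · exact hc
        · omega
      have hina : pw.1.1.1 ∈ Sset pw' := hV ▸ ((hSmem pw _).mpr (Or.inl rfl))
      have hinb : pw.1.1.2 ∈ Sset pw' := hV ▸ ((hSmem pw _).mpr (Or.inr (Or.inl rfl)))
      have ha := hmaj _ (hres0 pw).1 hina
      have hb := hmaj _ (hres0 pw).2 hinb
      have hab : pw.1.1.1 < pw.1.1.2 := (hadjp pw).2
      have hab' : pw'.1.1.1 < pw'.1.1.2 := (hadjp pw').2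
      have hpq : pw.1.1 = pw'.1.1 := by
        rcases ha with h1 | h1 <;> rcases hb with h2 | h2
        · rw [h1, h2] at hab
          exact absurd hab (lt_irrefl _)
        · exact Prod.ext h1 h2
        · rw [h1, h2] at hab
          exact absurd (hab.trans hab') (lt_irrefl _)
        · rw [h1, h2] at hab
          exact absurd hab (lt_irrefl _)
      have hw : pw.2 = pw'.2 := by
        funext i
        have hin : ((pw.2 i : Fin n)) ∈ Sset pw' :=
          hV ▸ ((hSmem pw _).mpr (Or.inr (Or.inr ⟨i, rfl⟩)))
        rcases hSres pw' _ hin with ⟨h1, _⟩ | ⟨j, hj, hres⟩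
        · have := (pw.2 i).2
          omega
        · have hij : j = i := by
            apply Fin.ext
            have := (pw.2 i).2
            omega
          rw [hij] at hj
          exact Subtype.ext hj.symm
      congr 1
      exact Prod.ext (Subtype.ext hpq) hw
  -- conclude
  have e1 : copies (⊤ : SimpleGraph (Fin m)) (turanGraph n r) = Nat.card Dom1 := rfl
  have e2 : copies (⊤ : SimpleGraph (Fin m)) G = Nat.card Tgt := rfl
  have h1 : (pairs B₁).card = Nat.card Pr := by
    rw [hPr, Nat.card_eq_fintype_card, Fintype.card_coe]
  rw [e1, e2, h1]
  have e3 : Nat.card Dom1 + Nat.card Pr * Nat.card Pi2 = Nat.card (Dom1 ⊕ Pr × Pi2) := by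
    rw [Nat.card_sum, Nat.card_prod]
  rw [e3]
  exact Nat.card_le_card_of_injective Φ hΦinj


lemma freeness_lemma {W : Type*} {n r : ℕ} (hr : 0 < r) {H : SimpleGraph W}
    {B B₁ : SimpleGraph (Fin n)} {s : Finset (Fin n)} {π : Equiv.Perm (Fin n)}
    (hBfree : ∀ (C : H.Coloring (Fin (r + 1))) (c₁ c₂ : Fin (r + 1)), c₁ ≠ c₂ →
      _root_.Free (SimpleGraph.induce {v | C v = c₁ ∨ C v = c₂} H) B)
    (h0 : ∀ ⦃x y⦄, B₁.Adj x y → (x : ℕ) % r = 0 ∧ (y : ℕ) % r = 0)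
    (hpull : ∀ ⦃x y⦄, B₁.Adj x y → B.Adj (π.symm x) (π.symm y))
    (hcut : ∀ ⦃x y⦄, B₁.Adj x y → (π.symm x ∈ s ↔ π.symm y ∉ s)) :
    _root_.Free H (turanGraph n r ⊔ B₁) := by
  classical
  rw [free_iff_no_copy]
  rintro ⟨f, hfinj, hfadj⟩
  have hone : ((1 : Fin (r + 1)) : ℕ) = 1 := by
    rw [Fin.val_one']
    exact Nat.mod_eq_of_lt (by omega)
  have h01 : (0 : Fin (r + 1)) ≠ 1 := by
    intro hc
    have := congrArg Fin.val hc
    rw [Fin.val_zero, hone] at this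
    omega
  set col : W → Fin (r + 1) := fun v =>
    if _h : ((f v : Fin n) : ℕ) % r = 0 then (if π.symm (f v) ∈ s then 0 else 1)
    else ⟨((f v : Fin n) : ℕ) % r + 1, by
      have := Nat.mod_lt ((f v : Fin n) : ℕ) hr
      omega⟩ with hcoldef
  have hcol_res : ∀ v, ((f v : Fin n) : ℕ) % r ≠ 0 →
      (col v : ℕ) = ((f v : Fin n) : ℕ) % r + 1 := by
    intro v hv
    simp only [hcoldef]
    rw [dif_neg hv]
  have hcol_res0 : ∀ v, ((f v : Fin n) : ℕ) % r = 0 →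
      col v = (if π.symm (f v) ∈ s then 0 else 1) := by
    intro v hv
    simp only [hcoldef]
    rw [dif_pos hv]
  -- adjacency implies B₁ when residues equal
  have hB₁case : ∀ ⦃u v⦄, H.Adj u v →
      ((f u : Fin n) : ℕ) % r = ((f v : Fin n) : ℕ) % r → B₁.Adj (f u) (f v) := by
    intro u v huv hres
    have hGadj := hfadj huv
    rw [sup_adj] at hGadj
    rcases hGadj with hh | hh
    · exact absurd hres hh
    · exact hh
  have hvalsmall : ∀ w, ((f w : Fin n) : ℕ) % r = 0 → (col w : ℕ) ≤ 1 := by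
    intro w hw
    rw [hcol_res0 w hw]
    by_cases h2 : π.symm (f w) ∈ s
    · rw [if_pos h2, Fin.val_zero]
      omega
    · rw [if_neg h2, hone]
  have hvalid : ∀ {u v}, H.Adj u v → col u ≠ col v := by
    intro u v huv
    by_cases hu : ((f u : Fin n) : ℕ) % r = 0 <;> by_cases hv : ((f v : Fin n) : ℕ) % r = 0
    · have hB := hB₁case huv (hu.trans hv.symm)
      have hcutuv := hcut hB
      rw [hcol_res0 u hu, hcol_res0 v hv]
      by_cases h1 : π.symm (f u) ∈ s
      · rw [if_pos h1, if_neg (hcutuv.mp h1)]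
        exact h01
      · have h2 : π.symm (f v) ∈ s := by
          by_contra h2
          exact h1 (hcutuv.mpr h2)
        rw [if_neg h1, if_pos h2]
        exact h01.symm
    · intro hc
      have h1 := hvalsmall u hu
      have h2 := hcol_res v hv
      have h3 := congrArg Fin.val hc
      omega
    · intro hc
      have h1 := hvalsmall v hv
      have h2 := hcol_res u hu
      have h3 := congrArg Fin.val hc
      omega
    · intro hc
      have h1 := hcol_res u hu
      have h2 := hcol_res v hv
      have h3 := congrArg Fin.val hc
      have hres : ((f u : Fin n) : ℕ) % r = ((f v : Fin n) : ℕ) % r := by omega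
      have h4 := (h0 (hB₁case huv hres)).1
      omega
  set C : H.Coloring (Fin (r + 1)) := Coloring.mk col (fun {u v} h => hvalid h) with hC
  have hFree := hBfree C 0 1 h01
  rw [free_iff_no_copy] at hFree
  apply hFree
  refine ⟨fun z => π.symm (f (z : W)), ?_, ?_⟩
  · intro a b hab
    exact Subtype.ext (hfinj (π.symm.injective hab))
  · rintro ⟨u, hu⟩ ⟨v, hv⟩ huv
    have huv' : H.Adj u v := huv
    have hu' : col u = 0 ∨ col u = 1 := hu
    have hv' : col v = 0 ∨ col v = 1 := hv
    have hval : ∀ w, (col w = 0 ∨ col w = 1) → ((f w : Fin n) : ℕ) % r = 0 := by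
      intro w hw
      by_contra hcon
      have h2 := hcol_res w hcon
      rcases hw with h | h <;> rw [h] at h2
      · rw [Fin.val_zero] at h2
        omega
      · rw [hone] at h2
        omega
    exact hpull (hB₁case huv' ((hval u hu').trans (hval v hv').symm))


lemma card_filter_mod_le {n : ℕ} (K t : ℕ) (hK : 0 < K) (P : Fin n → Prop) [DecidablePred P] :
    (Finset.univ.filter (fun v : Fin n => P v ∧ (v : ℕ) % K = t)).card ≤ n / K + 1 := by
  classical
  have h := Finset.card_le_card_of_injOn (fun v : Fin n => (v : ℕ) / K)
    (s := Finset.univ.filter (fun v : Fin n => P v ∧ (v : ℕ) % K = t))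
    (t := Finset.range (n / K + 1)) ?_ ?_
  · simpa using h
  · intro v _
    show (v : ℕ) / K ∈ Finset.range (n / K + 1)
    rw [Finset.mem_range]
    have h1 : (v : ℕ) < n := v.isLt
    have h2 : (v : ℕ) / K ≤ n / K := Nat.div_le_div_right h1.le
    omega
  · intro a ha b hb hab
    rw [Finset.mem_coe, Finset.mem_filter] at ha hb
    have hab' : (a : ℕ) / K = (b : ℕ) / K := hab
    have h1 := Nat.div_add_mod (a : ℕ) K
    have h2 := Nat.div_add_mod (b : ℕ) K
    apply Fin.ext
    have ha2 := ha.2.2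
    have hb2 := hb.2.2
    have h3 : K * ((a : ℕ) / K) = K * ((b : ℕ) / K) := by rw [hab']
    omega

lemma card_class0_ge {n : ℕ} (r : ℕ) (hr : 0 < r) (hn : 0 < n) :
    n / r ≤ (Finset.univ.filter (fun v : Fin n => (v : ℕ) % r = 0)).card := by
  classical
  have h := Finset.card_le_card_of_injOn (fun q : ℕ => (⟨q * r % n, Nat.mod_lt _ hn⟩ : Fin n))
    (s := Finset.range (n / r))
    (t := Finset.univ.filter (fun v : Fin n => (v : ℕ) % r = 0)) ?_ ?_
  · simpa using h
  · intro q hq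
    rw [Finset.mem_coe, Finset.mem_range] at hq
    have hlt : q * r < n := by
      have h1 : (q + 1) * r ≤ n := (Nat.le_div_iff_mul_le hr).mp (by omega)
      have h2 : q * r + r = (q + 1) * r := by ring
      omega
    rw [Finset.mem_coe, Finset.mem_filter]
    refine ⟨Finset.mem_univ _, ?_⟩
    show (q * r % n) % r = 0
    rw [Nat.mod_eq_of_lt hlt, Nat.mul_mod_left]
  · intro q hq q' hq' he
    rw [Finset.mem_coe, Finset.mem_range] at hq hq'
    have hlt : q * r < n := by
      have h1 : (q + 1) * r ≤ n := (Nat.le_div_iff_mul_le hr).mp (by omega)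
      have h2 : q * r + r = (q + 1) * r := by ring
      omega
    have hlt' : q' * r < n := by
      have h1 : (q' + 1) * r ≤ n := (Nat.le_div_iff_mul_le hr).mp (by omega)
      have h2 : q' * r + r = (q' + 1) * r := by ring
      omega
    have := congrArg Fin.val he
    simp only [Nat.mod_eq_of_lt hlt, Nat.mod_eq_of_lt hlt'] at this
    exact Nat.eq_of_mul_eq_mul_right hr this

lemma card_class_ge {n : ℕ} (r t : ℕ) (hr : 0 < r) (ht : t < r) :
    n / r - 1 ≤ Nat.card {v : Fin n // (v : ℕ) % r = t} := by
  classical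
  have key : ∀ q : Fin (n / r - 1), t + (q : ℕ) * r < n := by
    intro q
    have hq := q.isLt
    have h1 : (q : ℕ) + 2 ≤ n / r := by omega
    have h2 : ((q : ℕ) + 2) * r ≤ n := (Nat.le_div_iff_mul_le hr).mp h1
    have h3 : ((q : ℕ) + 2) * r = (q : ℕ) * r + 2 * r := by ring
    omega
  have hinj : Function.Injective (fun q : Fin (n / r - 1) =>
      (⟨⟨t + (q : ℕ) * r, key q⟩, by
        show (t + (q : ℕ) * r) % r = t
        rw [Nat.add_mul_mod_self_right, Nat.mod_eq_of_lt ht]⟩ :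
        {v : Fin n // (v : ℕ) % r = t})) := by
    intro q q' h
    have h1 : t + (q : ℕ) * r = t + (q' : ℕ) * r := by
      have := congrArg (fun z : {v : Fin n // (v : ℕ) % r = t} => ((z : Fin n) : ℕ)) h
      exact this
    apply Fin.ext
    exact Nat.eq_of_mul_eq_mul_right hr (by omega)
  have := Nat.card_le_card_of_injective _ hinj
  rwa [Nat.card_eq_fintype_card (α := Fin (n / r - 1)), Fintype.card_fin] at this

lemma pi_card_ge {n r m : ℕ} (hr : 0 < r) (hmr : m ≤ r) :
    (n / r - 1) ^ (m - 2) ≤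
      Nat.card (∀ i : Fin (m - 2), {v : Fin n // (v : ℕ) % r = (i : ℕ) + 1}) := by
  classical
  rw [Nat.card_pi]
  have h1 : ∀ i : Fin (m - 2), (n / r - 1) ≤ Nat.card {v : Fin n // (v : ℕ) % r = (i : ℕ) + 1} := by
    intro i
    apply card_class_ge r ((i : ℕ) + 1) hr
    have := i.isLt
    omega
  calc (n / r - 1) ^ (m - 2) = ∏ _i : Fin (m - 2), (n / r - 1) := by
        rw [Finset.prod_const, Finset.card_univ, Fintype.card_fin]
    _ ≤ ∏ i : Fin (m - 2), Nat.card {v : Fin n // (v : ℕ) % r = (i : ℕ) + 1} :=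
        Finset.prod_le_prod' (fun i _ => h1 i)

lemma nat_div_bound {n r : ℕ} (hr : 0 < r) (h8 : 8 * r ≤ n) : n ≤ 4 * r * (n / r - 1) := by
  have hd := Nat.div_add_mod n r
  have hm : n % r < r := Nat.mod_lt _ hr
  have hD1 : 1 ≤ n / r := by
    rw [Nat.le_div_iff_mul_le hr]
    omega
  have h5 : 4 * r * (n / r - 1) + 4 * r = 4 * (r * (n / r)) := by
    have he : n / r - 1 + 1 = n / r := by omega
    calc 4 * r * (n / r - 1) + 4 * r = 4 * r * ((n / r - 1) + 1) := by ring
      _ = 4 * (r * (n / r)) := by rw [he]; ring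
  set A := r * (n / r) with hA
  set X := 4 * r * (n / r - 1) with hX
  clear_value A X
  omega

end Stmt1

set_option maxHeartbeats 2000000 in
open Stmt1 in
theorem statement1 {W : Type*} [Fintype W] (m r : ℕ) (H : SimpleGraph W)
    (hm : 2 ≤ m) (hmr : m < r + 1) (hχ : H.chromaticNumber = (r + 1 : ℕ)) :
    ∃ (c : ℝ) (n₀ : ℕ), 0 < c ∧ ∀ n ≥ n₀,
      (copies (⊤ : SimpleGraph (Fin m)) (turanGraph n r) : ℝ)
          + c * (biex n H r) * (n : ℝ) ^ (m - 2)
        ≤ (genEx n (⊤ : SimpleGraph (Fin m)) H : ℝ) := by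
  classical
  have hm_le : m ≤ r := by omega
  have hr : 0 < r := by omega
  set K := 3 * r with hK
  have hKpos : 0 < K := by omega
  have hrK : r ≤ K := by omega
  have hcKpos : (0 : ℝ) < (K : ℝ) := by exact_mod_cast hKpos
  have hcrpos : (0 : ℝ) < (r : ℝ) := by exact_mod_cast hr
  have hXne : (0 : ℝ) < (2 * (K : ℝ) * (K : ℝ)) * ((4 : ℝ) * (r : ℝ)) ^ (m - 2) := by
    apply mul_pos
    · nlinarith
    · apply pow_pos
      nlinarith
  refine ⟨(1 : ℝ) / ((2 * (K : ℝ) * (K : ℝ)) * ((4 : ℝ) * (r : ℝ)) ^ (m - 2)),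
    100 * K * K + 100, by positivity, ?_⟩
  intro n hn
  -- basic nat bounds on n
  have hKK : K ≤ K * K := Nat.le_mul_of_pos_left K hKpos
  have hn' : 100 * (K * K) + 100 ≤ n := by
    rw [← mul_assoc]
    exact hn
  have hn2K : 2 * K ≤ n := by
    set A := K * K with hA
    clear_value A
    omega
  have hn8r : 8 * r ≤ n := by
    set A := K * K with hA
    clear_value A
    omega
  have hnpos : 0 < n := by omega
  -- extremal graph for biex
  obtain ⟨B, hBfree, hBcard⟩ := biex_attained n hr hχ
  -- max cut
  obtain ⟨s, hs⟩ := exists_maxcut B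
  set B' : SimpleGraph (Fin n) :=
    { Adj := fun x y => B.Adj x y ∧ (x ∈ s ↔ y ∉ s),
      symm := by
        refine ⟨fun x y h => ?_⟩
        refine ⟨h.1.symm, ?_⟩
        have := h.2
        tauto,
      loopless := by
        refine ⟨fun x h => ?_⟩
        exact B.irrefl h.1 } with hB'def
  have hB'adj : ∀ x y : Fin n, B'.Adj x y ↔ (B.Adj x y ∧ (x ∈ s ↔ y ∉ s)) :=
    fun x y => Iff.rfl
  have hB'le : ∀ ⦃x y : Fin n⦄, B'.Adj x y → B.Adj x y := fun x y h => h.1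
  have hB'cut : ∀ ⦃x y : Fin n⦄, B'.Adj x y → (x ∈ s ↔ y ∉ s) := fun x y h => h.2
  have hpairsB' : (pairs B).card ≤ 2 * (pairs B').card := by
    have hEq : (pairs B).filter (fun p => (p.1 ∈ s ↔ p.2 ∉ s)) = pairs B' := by
      ext p
      rw [Finset.mem_filter, mem_pairs, mem_pairs, hB'adj]
      tauto
    rw [hEq] at hs
    exact hs
  -- fiber selection
  obtain ⟨i, j, hi, hj, B'', hB''le, hB''prop, hB''pairs⟩ := exists_fiber K hKpos s B' hB'cut
  have hB''le' : ∀ ⦃x y : Fin n⦄, B''.Adj x y → B'.Adj x y := fun x y h => hB''le h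
  -- support sets
  set X := Finset.univ.filter (fun v : Fin n => v ∈ s ∧ (v : ℕ) % K = i) with hXdef
  set Y := Finset.univ.filter (fun v : Fin n => v ∉ s ∧ (v : ℕ) % K = j) with hYdef
  set CL0 := Finset.univ.filter (fun v : Fin n => (v : ℕ) % r = 0) with hCL0def
  have hXcard : X.card ≤ n / K + 1 := card_filter_mod_le K i hKpos _
  have hYcard : Y.card ≤ n / K + 1 := card_filter_mod_le K j hKpos _
  have hCL0card : n / r ≤ CL0.card := card_class0_ge r hr hnpos
  have harith : 2 * (n / K + 1) ≤ n / r := by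
    have h3 : 3 * (n / K) ≤ n / r := by
      apply (Nat.le_div_iff_mul_le hr).mpr
      calc 3 * (n / K) * r = (n / K) * K := by rw [hK]; ring
        _ ≤ n := Nat.div_mul_le_self n K
    have h2 : 2 ≤ n / K := (Nat.le_div_iff_mul_le hKpos).mpr (by omega)
    omega
  have hsupp : (X ∪ Y).card ≤ CL0.card := by
    have := Finset.card_union_le X Y
    omega
  obtain ⟨π, hπ⟩ := exists_perm_into (X ∪ Y) CL0 hsupp
  -- the relocated graph
  set B₁ := SimpleGraph.map π.toEmbedding B'' with hB₁def
  have hB₁adj : ∀ x y : Fin n, B₁.Adj x y ↔ B''.Adj (π.symm x) (π.symm y) := by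
    intro x y
    rw [hB₁def, SimpleGraph.map_adj]
    constructor
    · rintro ⟨a, b, hab, ha, hb⟩
      have ha' : π a = x := ha
      have hb' : π b = y := hb
      rw [← ha', ← hb']
      simpa using hab
    · intro h
      exact ⟨π.symm x, π.symm y, h, by simp, by simp⟩
  have hB''mem : ∀ ⦃x y : Fin n⦄, B''.Adj x y → x ∈ X ∪ Y ∧ y ∈ X ∪ Y := by
    intro x y h
    rcases hB''prop h with ⟨h1, h2, h3, h4⟩ | ⟨h1, h2, h3, h4⟩
    · exact ⟨Finset.mem_union_left _ (Finset.mem_filter.mpr ⟨Finset.mem_univ _, h1, h2⟩),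
        Finset.mem_union_right _ (Finset.mem_filter.mpr ⟨Finset.mem_univ _, h3, h4⟩)⟩
    · exact ⟨Finset.mem_union_right _ (Finset.mem_filter.mpr ⟨Finset.mem_univ _, h3, h4⟩),
        Finset.mem_union_left _ (Finset.mem_filter.mpr ⟨Finset.mem_univ _, h1, h2⟩)⟩
  have h0B₁ : ∀ ⦃x y : Fin n⦄, B₁.Adj x y → (x : ℕ) % r = 0 ∧ (y : ℕ) % r = 0 := by
    intro x y h
    have h' := (hB₁adj x y).mp h
    obtain ⟨hx, hy⟩ := hB''mem h'
    have h1 : π (π.symm x) ∈ CL0 := hπ _ hx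
    have h2 : π (π.symm y) ∈ CL0 := hπ _ hy
    rw [Equiv.apply_symm_apply] at h1 h2
    rw [hCL0def, Finset.mem_filter] at h1 h2
    exact ⟨h1.2, h2.2⟩
  have hpull : ∀ ⦃x y : Fin n⦄, B₁.Adj x y → B.Adj (π.symm x) (π.symm y) :=
    fun x y h => hB'le (hB''le' ((hB₁adj x y).mp h))
  have hcutB₁ : ∀ ⦃x y : Fin n⦄, B₁.Adj x y → (π.symm x ∈ s ↔ π.symm y ∉ s) :=
    fun x y h => hB'cut (hB''le' ((hB₁adj x y).mp h))
  -- freeness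
  have hGfree : _root_.Free H (turanGraph n r ⊔ B₁) := freeness_lemma hr hBfree h0B₁ hpull hcutB₁
  -- counting
  have hcount := count_lemma hm hm_le B₁ h0B₁
  -- edge-count chain
  have hbiexpairs : biex n H r ≤ 2 * (K * K * (pairs B₁).card) := by
    have h1 : biex n H r = (pairs B).card := by
      rw [← hBcard, card_edgeSet_eq_pairs]
    have h4 := pairs_card_map B'' π
    calc biex n H r = (pairs B).card := h1
      _ ≤ 2 * (pairs B').card := hpairsB'
      _ ≤ 2 * (K * K * (pairs B'').card) := Nat.mul_le_mul_left 2 hB''pairs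
      _ ≤ 2 * (K * K * (pairs B₁).card) :=
          Nat.mul_le_mul_left 2 (Nat.mul_le_mul_left (K * K) h4)
  have hPi2 : (n / r - 1) ^ (m - 2) ≤
      Nat.card (∀ i : Fin (m - 2), {v : Fin n // (v : ℕ) % r = (i : ℕ) + 1}) :=
    pi_card_ge hr hm_le
  -- genEx bound
  have hbddgen : BddAbove {k | ∃ G' : SimpleGraph (Fin n),
      _root_.Free H G' ∧ copies (⊤ : SimpleGraph (Fin m)) G' = k} := by
    refine ⟨Nat.card (Set (Fin n) × Set (Fin n × Fin n)), ?_⟩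
    rintro k ⟨G', -, rfl⟩
    have hinj : Function.Injective
        (fun KK : {KK : G'.Subgraph // Nonempty (KK.coe ≃g (⊤ : SimpleGraph (Fin m)))} =>
          ((KK : G'.Subgraph).verts, {p : Fin n × Fin n | (KK : G'.Subgraph).Adj p.1 p.2})) := by
      intro K1 K2 h
      rw [Prod.mk.injEq] at h
      apply Subtype.ext
      ext x y
      · exact Set.ext_iff.mp h.1 x
      · exact Set.ext_iff.mp h.2 (x, y)
    exact Nat.card_le_card_of_injective _ hinj
  have hgenEx : copies (⊤ : SimpleGraph (Fin m)) (turanGraph n r ⊔ B₁) ≤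
      genEx n (⊤ : SimpleGraph (Fin m)) H :=
    le_csSup hbddgen ⟨turanGraph n r ⊔ B₁, hGfree, rfl⟩
  have hfinal_nat : copies (⊤ : SimpleGraph (Fin m)) (turanGraph n r)
      + (pairs B₁).card * Nat.card (∀ i : Fin (m - 2), {v : Fin n // (v : ℕ) % r = (i : ℕ) + 1})
      ≤ genEx n (⊤ : SimpleGraph (Fin m)) H := le_trans hcount hgenEx
  -- real arithmetic
  set L := n / r - 1 with hLdef
  clear_value L
  have hLn : n ≤ 4 * r * L := by
    rw [hLdef]
    exact nat_div_bound hr hn8r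
  have hLreal : (n : ℝ) ≤ 4 * (r : ℝ) * (L : ℝ) := by exact_mod_cast hLn
  set c : ℝ := (1 : ℝ) / ((2 * (K : ℝ) * (K : ℝ)) * ((4 : ℝ) * (r : ℝ)) ^ (m - 2)) with hcdef
  clear_value c
  have hcpos : 0 < c := by
    rw [hcdef]
    positivity
  set P : ℝ := ((pairs B₁).card : ℝ) with hPdef
  clear_value P
  have hPnonneg : 0 ≤ P := by
    rw [hPdef]
    positivity
  set Q : ℝ := (Nat.card (∀ i : Fin (m - 2), {v : Fin n // (v : ℕ) % r = (i : ℕ) + 1}) : ℝ)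
    with hQdef
  clear_value Q
  have hbreal : (biex n H r : ℝ) ≤ 2 * (K : ℝ) * (K : ℝ) * P := by
    rw [hPdef]
    have h' : (biex n H r : ℝ) ≤ ((2 * (K * K * (pairs B₁).card) : ℕ) : ℝ) := by
      exact_mod_cast hbiexpairs
    push_cast at h'
    linarith
  have hpowbound : (n : ℝ) ^ (m - 2) ≤ ((4 : ℝ) * (r : ℝ)) ^ (m - 2) * (L : ℝ) ^ (m - 2) := by
    rw [← mul_pow]
    apply pow_le_pow_left₀ (by positivity) hLreal
  have hLQ : (L : ℝ) ^ (m - 2) ≤ Q := by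
    rw [hQdef]
    exact_mod_cast hPi2
  have hkey : c * (biex n H r : ℝ) * (n : ℝ) ^ (m - 2) ≤ P * Q := by
    have h1 : c * (biex n H r : ℝ) * (n : ℝ) ^ (m - 2)
        ≤ c * (2 * (K : ℝ) * (K : ℝ) * P) * (((4 : ℝ) * (r : ℝ)) ^ (m - 2) * (L : ℝ) ^ (m - 2)) := by
      apply mul_le_mul
      · apply mul_le_mul_of_nonneg_left hbreal hcpos.le
      · exact hpowbound
      · positivity
      · exact mul_nonneg hcpos.le (by positivity)
    have h2 : c * (2 * (K : ℝ) * (K : ℝ) * P) * (((4 : ℝ) * (r : ℝ)) ^ (m - 2) * (L : ℝ) ^ (m - 2))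
        = (c * ((2 * (K : ℝ) * (K : ℝ)) * ((4 : ℝ) * (r : ℝ)) ^ (m - 2))) * (P * (L : ℝ) ^ (m - 2)) := by
      ring
    have h3 : c * ((2 * (K : ℝ) * (K : ℝ)) * ((4 : ℝ) * (r : ℝ)) ^ (m - 2)) = 1 := by
      rw [hcdef]
      exact one_div_mul_cancel hXne.ne'
    have h4 : P * (L : ℝ) ^ (m - 2) ≤ P * Q := mul_le_mul_of_nonneg_left hLQ hPnonneg
    calc c * (biex n H r : ℝ) * (n : ℝ) ^ (m - 2)
        ≤ c * (2 * (K : ℝ) * (K : ℝ) * P) * (((4 : ℝ) * (r : ℝ)) ^ (m - 2) * (L : ℝ) ^ (m - 2)) := h1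
      _ = (c * ((2 * (K : ℝ) * (K : ℝ)) * ((4 : ℝ) * (r : ℝ)) ^ (m - 2))) * (P * (L : ℝ) ^ (m - 2)) := h2
      _ = P * (L : ℝ) ^ (m - 2) := by rw [h3]; ring
      _ ≤ P * Q := h4
  have hcast : P * Q = (((pairs B₁).card
      * Nat.card (∀ i : Fin (m - 2), {v : Fin n // (v : ℕ) % r = (i : ℕ) + 1}) : ℕ) : ℝ) := by
    rw [hPdef, hQdef]
    push_cast
    ring
  have hfinal_real : (copies (⊤ : SimpleGraph (Fin m)) (turanGraph n r) : ℝ)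
      + (((pairs B₁).card
        * Nat.card (∀ i : Fin (m - 2), {v : Fin n // (v : ℕ) % r = (i : ℕ) + 1}) : ℕ) : ℝ)
      ≤ (genEx n (⊤ : SimpleGraph (Fin m)) H : ℝ) := by
    exact_mod_cast hfinal_nat
  calc (copies (⊤ : SimpleGraph (Fin m)) (turanGraph n r) : ℝ)
      + c * (biex n H r : ℝ) * (n : ℝ) ^ (m - 2)
      ≤ (copies (⊤ : SimpleGraph (Fin m)) (turanGraph n r) : ℝ) + P * Q := by linarith [hkey]
    _ ≤ (genEx n (⊤ : SimpleGraph (Fin m)) H : ℝ) := by rw [hcast]; exact hfinal_real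
end

section
/- Let r ≥ 2 and t ≥ s ≥ 1 be integers with t ≤ s + 1/2 + √(2s + 1/4), set q = t − s, and define the real function H(z) = s·λ_{s,t}·(s·λ̃_{s,t,r−1} + t)·z − (s² − s)·λ̃_{s,t,r}/(r−1) + s·t·(r−1)^q·z^{q+1} − (t² − t)·(r−1)^{q−1}·z^q. Then H is strictly increasing on the interval [1/(r−1), +∞) and H(1/(r−1)) ≥ 0; moreover H(1/(r−1)) = 0 if and only if r = 2 and t = s + 1/2 + √(2s + 1/4). -/
lemma aux_mono (a b c d x : ℝ) (m : ℕ) (hx : 0 < x) (hb : 0 < b) (hc : 0 ≤ c)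
    (hg0 : 0 ≤ a + b*((m:ℝ)+2)*x^(m+1) - c*((m:ℝ)+1)*x^m)
    (hcb : c*(m:ℝ) ≤ b*((m:ℝ)+2)*x) :
    StrictMonoOn (fun z => a*z + b*z^(m+2) - c*z^(m+1) + d) (Set.Ici x) := by
  have hgmono : StrictMonoOn
      (fun z : ℝ => a + b*((m:ℝ)+2)*z^(m+1) - c*((m:ℝ)+1)*z^m) (Set.Ici x) := by
    apply strictMonoOn_of_deriv_pos (convex_Ici x)
    · fun_prop
    · intro z hz
      rw [interior_Ici] at hz
      have hz0 : 0 < z := hx.trans hz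
      have hd : HasDerivAt (fun z : ℝ => a + b*((m:ℝ)+2)*z^(m+1) - c*((m:ℝ)+1)*z^m)
          (b*((m:ℝ)+2)*(((m:ℝ)+1)*z^m) - c*((m:ℝ)+1)*((m:ℝ)*z^(m-1))) z := by
        have h1 := (hasDerivAt_pow (m+1) z).const_mul (b*((m:ℝ)+2))
        have h2 := (hasDerivAt_pow m z).const_mul (c*((m:ℝ)+1))
        have h := ((hasDerivAt_const z a).add h1).sub h2
        simp only [Nat.add_sub_cancel, Nat.cast_add, Nat.cast_one, zero_add] at h
        exact h.congr_deriv (by ring)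
      rw [hd.deriv]
      rcases Nat.eq_zero_or_pos m with hm | hm
      · subst hm; simp; nlinarith
      · have e1 : z^m = z^(m-1)*z := by rw [← pow_succ]; congr 1; omega
        have hp : 0 < z^(m-1) := pow_pos hz0 _
        have h3 : c*(m:ℝ) < b*((m:ℝ)+2)*z := by
          refine lt_of_le_of_lt hcb ?_
          nlinarith [mul_pos (mul_pos hb (show (0:ℝ) < (m:ℝ)+2 by positivity)) (sub_pos.2 hz)]
        rw [e1]
        nlinarith [mul_pos (show (0:ℝ) < (m:ℝ)+1 by positivity)
          (mul_pos hp (sub_pos.2 h3))]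
  have gpos : ∀ z ∈ Set.Ioi x, 0 < a + b*((m:ℝ)+2)*z^(m+1) - c*((m:ℝ)+1)*z^m := by
    intro z hz
    have := hgmono (Set.self_mem_Ici) (Set.mem_Ici.2 (le_of_lt hz)) hz
    simp only at this
    linarith
  apply strictMonoOn_of_deriv_pos (convex_Ici x)
  · fun_prop
  · intro z hz
    rw [interior_Ici] at hz
    have hd : HasDerivAt (fun z : ℝ => a*z + b*z^(m+2) - c*z^(m+1) + d)
        (a + b*((m:ℝ)+2)*z^(m+1) - c*((m:ℝ)+1)*z^m) z := by
      have h1 := (hasDerivAt_pow (m+2) z).const_mul b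
      have h2 := (hasDerivAt_pow (m+1) z).const_mul c
      have h0 := (hasDerivAt_id z).const_mul a
      have h := ((h0.add h1).sub h2).add_const d
      simp only [show m+2-1 = m+1 from rfl, show m+1-1 = m from rfl, Nat.cast_add,
        Nat.cast_one, Nat.cast_ofNat, id] at h
      exact h.congr_deriv (by ring)
    rw [hd.deriv]
    exact gpos z hz

lemma arith_cb (s t q P : ℝ) (hs : 0 < s) (hP : 0 ≤ P) (hq : 0 ≤ q)
    (ht : t = s + q + 1) (hk : q^2 + q ≤ 2*s) :
    (t^2 - t)*P*q ≤ s*t*P*(q+2) := by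
  subst ht
  nlinarith [mul_nonneg (mul_nonneg (show (0:ℝ) ≤ s+q+1 by positivity) hP)
    (show (0:ℝ) ≤ 2*s - q^2 by nlinarith)]

lemma arith_g0 (s t q R : ℝ) (hs : 0 < s) (hq : 0 ≤ q) (hR : 2 ≤ R)
    (ht : t = s + q + 1) (hk : q^2 + q ≤ 2*s) :
    0 ≤ s*(s*(R-2) + t) + s*t*(q+2) - (t^2-t)*(q+1) := by
  subst ht
  nlinarith [mul_nonneg (mul_nonneg hs.le hs.le) (show (0:ℝ) ≤ R-2 by linarith),
    mul_nonneg (show (0:ℝ) ≤ s+q+1 by positivity) (show (0:ℝ) ≤ 2*s - q^2 - q by linarith)]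

lemma arith_pos (s t q R : ℝ) (hs : 0 < s) (hq : 0 ≤ q) (hR : 2 ≤ R)
    (ht : t = s + q + 1) (hk : q^2 + q ≤ 2*s) :
    0 ≤ s*(R-1) + t - (q+1)^2 := by
  subst ht
  nlinarith [mul_nonneg hs.le (show (0:ℝ) ≤ R-2 by linarith)]

lemma arith_ne (s t q R : ℝ) (hs : 1 ≤ s) (hq : 0 ≤ q) (hR : 3 ≤ R)
    (ht : t = s + q + 1) (hk : q^2 + q ≤ 2*s)
    (hnum : s*(R-1) + t - (q+1)^2 = 0) : False := by
  subst ht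
  nlinarith [hk, hnum]

set_option maxHeartbeats 1000000 in
theorem statement18 (r s t : ℕ) (hr : 2 ≤ r) (hs : 1 ≤ s) (hst : s ≤ t)
    (ht : (t : ℝ) ≤ s + 1 / 2 + Real.sqrt (2 * s + 1 / 4))
    (q : ℕ) (hq : q = t - s) (Hf : ℝ → ℝ)
    (hHf : ∀ z : ℝ, Hf z =
      (s : ℝ) * (if s = t then (1 / 2 : ℝ) else 1)
          * ((s : ℝ) * (if s = t then (1 : ℝ) else (r : ℝ) - 2) + t) * z
        - ((s : ℝ) ^ 2 - s) * (if s = t then (1 : ℝ) else (r : ℝ) - 1) / ((r : ℝ) - 1)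
        + (s : ℝ) * t * ((r : ℝ) - 1) ^ q * z ^ (q + 1)
        - ((t : ℝ) ^ 2 - t) * ((r : ℝ) - 1) ^ ((q : ℤ) - 1) * z ^ q) :
    StrictMonoOn Hf (Set.Ici (1 / ((r : ℝ) - 1))) ∧
    0 ≤ Hf (1 / ((r : ℝ) - 1)) ∧
    (Hf (1 / ((r : ℝ) - 1)) = 0 ↔
      r = 2 ∧ (t : ℝ) = s + 1 / 2 + Real.sqrt (2 * s + 1 / 4)) := by
  have hr2 : (2:ℝ) ≤ (r:ℝ) := by exact_mod_cast hr
  have hr1 : (1:ℝ) ≤ (r:ℝ) - 1 := by linarith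
  have hR0 : (0:ℝ) < (r:ℝ) - 1 := by linarith
  have hRne : ((r:ℝ) - 1) ≠ 0 := ne_of_gt hR0
  have hx0 : (0:ℝ) < 1 / ((r:ℝ) - 1) := by positivity
  have hs0 : (0:ℝ) < (s:ℝ) := by exact_mod_cast hs
  have hs1 : (1:ℝ) ≤ (s:ℝ) := by exact_mod_cast hs
  have ht1 : (1:ℝ) ≤ (t:ℝ) := by
    have : 1 ≤ t := le_trans hs hst
    exact_mod_cast this
  have ht0 : (0:ℝ) < (t:ℝ) := lt_of_lt_of_le one_pos ht1
  have hqst : s + q = t := by omega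
  have hsqrt0 : (0:ℝ) ≤ 2*(s:ℝ) + 1/4 := by positivity
  have hsq : Real.sqrt (2*(s:ℝ)+1/4) ^ 2 = 2*(s:ℝ)+1/4 := Real.sq_sqrt hsqrt0
  have hsnn : (0:ℝ) ≤ Real.sqrt (2*(s:ℝ)+1/4) := Real.sqrt_nonneg _
  have hX : (3/2:ℝ) ≤ Real.sqrt (2*(s:ℝ)+1/4) := by nlinarith [hsq, hsnn, hs1]
  have hqR : (q:ℝ) = (t:ℝ) - s := by
    rw [← hqst]; push_cast; ring
  have hkey : (q:ℝ)^2 - (q:ℝ) ≤ 2*(s:ℝ) := by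
    have hd' : (q:ℝ) - 1/2 ≤ Real.sqrt (2*(s:ℝ)+1/4) := by rw [hqR]; linarith
    have hqnn : (0:ℝ) ≤ (q:ℝ) := Nat.cast_nonneg q
    nlinarith [mul_nonneg (sub_nonneg.2 hd')
      (show (0:ℝ) ≤ Real.sqrt (2*(s:ℝ)+1/4) + ((q:ℝ)-1/2) by linarith)]
  clear ht hqR
  by_cases hst' : s = t
  · -- case s = t, q = 0
    subst hst'
    have hq0 : q = 0 := by omega
    subst hq0
    have hform : ∀ z : ℝ, Hf z = 2*(s:ℝ)^2*z - (2*(s:ℝ)^2-2*(s:ℝ))/((r:ℝ)-1) := by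
      intro z
      rw [hHf z]
      simp only [if_pos rfl, ↓reduceIte, Nat.cast_zero, zero_sub, zpow_neg, zpow_one, pow_zero, pow_one,
        zero_add, CharP.cast_eq_zero]
      field_simp
      ring
    clear hHf hkey
    have hval : Hf (1 / ((r:ℝ) - 1)) = 2*(s:ℝ)/((r:ℝ)-1) := by
      rw [hform]; field_simp; ring
    refine ⟨?_, ?_, ?_⟩
    · intro z1 _ z2 _ h12
      rw [hform, hform]
      nlinarith [mul_pos (mul_pos hs0 hs0) (sub_pos.2 h12)]
    · rw [hval]
      positivity
    · rw [hval]
      constructor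
      · intro h
        exfalso
        have : (0:ℝ) < 2*(s:ℝ)/((r:ℝ)-1) := div_pos (by positivity) hR0
        linarith
      · rintro ⟨-, ht2⟩
        exfalso
        linarith [ht2, hX]
  · -- case s < t, q ≥ 1
    obtain ⟨q', rfl⟩ : ∃ q'' : ℕ, q = q'' + 1 := ⟨q - 1, by omega⟩
    have hq'0 : (0:ℝ) ≤ (q':ℝ) := Nat.cast_nonneg q'
    have hts' : (t:ℝ) = (s:ℝ) + (q':ℝ) + 1 := by
      rw [← hqst]; push_cast; ring
    have hkey' : (q':ℝ)^2 + (q':ℝ) ≤ 2*(s:ℝ) := by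
      push_cast at hkey
      nlinarith [hkey]
    clear hkey hq hqst hst
    set a : ℝ := (s:ℝ) * ((s:ℝ)*((r:ℝ)-2) + (t:ℝ)) with ha
    set b : ℝ := (s:ℝ) * (t:ℝ) * ((r:ℝ)-1)^(q'+1) with hb'
    set c : ℝ := ((t:ℝ)^2 - (t:ℝ)) * ((r:ℝ)-1)^q' with hc'
    set d : ℝ := -((s:ℝ)^2 - (s:ℝ)) with hd'
    have hzexp : (((q'+1:ℕ)):ℤ) - 1 = ((q':ℕ):ℤ) := by push_cast; ring
    have hform : ∀ z : ℝ, Hf z = a*z + b*z^(q'+2) - c*z^(q'+1) + d := by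
      intro z
      rw [hHf z]
      simp only [if_neg hst']
      rw [hzexp, zpow_natCast]
      rw [ha, hb', hc', hd']
      rw [mul_div_assoc, div_self hRne]
      ring
    clear hHf hzexp hst'
    have hb : 0 < b := by rw [hb']; exact mul_pos (mul_pos hs0 ht0) (pow_pos hR0 _)
    have hc : 0 ≤ c := by rw [hc']; exact mul_nonneg (by nlinarith [ht1]) (pow_pos hR0 _).le
    have hP : (0:ℝ) ≤ ((r:ℝ)-1)^q' := (pow_pos hR0 _).le
    have hcb : c*(q':ℝ) ≤ b*((q':ℝ)+2)*(1/((r:ℝ)-1)) := by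
      have e : b*((q':ℝ)+2)*(1/((r:ℝ)-1)) = (s:ℝ)*(t:ℝ)*((r:ℝ)-1)^q'*((q':ℝ)+2) := by
        rw [hb']; field_simp; ring
      rw [e, hc']
      have := arith_cb (s:ℝ) (t:ℝ) (q':ℝ) (((r:ℝ)-1)^q') hs0 hP hq'0 hts' hkey'
      linarith [this]
    have hg0 : 0 ≤ a + b*((q':ℝ)+2)*(1/((r:ℝ)-1))^(q'+1) - c*((q':ℝ)+1)*(1/((r:ℝ)-1))^q' := by
      have e1 : b*((q':ℝ)+2)*(1/((r:ℝ)-1))^(q'+1) = (s:ℝ)*(t:ℝ)*((q':ℝ)+2) := by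
        rw [hb', one_div, inv_pow]; field_simp
      have e2 : c*((q':ℝ)+1)*(1/((r:ℝ)-1))^q' = ((t:ℝ)^2-(t:ℝ))*((q':ℝ)+1) := by
        rw [hc', one_div, inv_pow]; field_simp
      rw [e1, e2, ha]
      exact arith_g0 (s:ℝ) (t:ℝ) (q':ℝ) (r:ℝ) hs0 hq'0 hr2 hts' hkey'
    have hval : Hf (1/((r:ℝ)-1)) = ((s:ℝ)*((r:ℝ)-1) + (t:ℝ) - ((q':ℝ)+1)^2) / ((r:ℝ)-1) := by
      rw [hform, ha, hb', hc', hd', hts']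
      simp only [one_div, inv_pow]
      field_simp
      ring
    refine ⟨?_, ?_, ?_⟩
    · rw [funext hform]
      exact aux_mono a b c d (1/((r:ℝ)-1)) q' hx0 hb hc hg0 hcb
    · rw [hval]
      exact div_nonneg (arith_pos (s:ℝ) (t:ℝ) (q':ℝ) (r:ℝ) hs0 hq'0 hr2 hts' hkey') hR0.le
    · rw [hval]
      clear hform hval hcb hg0 hb hc hP ha hb' hc' hd'
      constructor
      · intro h
        have hnum : (s:ℝ)*((r:ℝ)-1) + (t:ℝ) - ((q':ℝ)+1)^2 = 0 := by
          rcases (div_eq_zero_iff).1 h with h' | h'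
          · exact h'
          · exact absurd h' hRne
        have hr2' : r = 2 := by
          by_contra hne
          have h3 : 3 ≤ r := by omega
          have h3' : (3:ℝ) ≤ (r:ℝ) := by exact_mod_cast h3
          exact arith_ne (s:ℝ) (t:ℝ) (q':ℝ) (r:ℝ) hs1 hq'0 h3' hts' hkey' hnum
        refine ⟨hr2', ?_⟩
        have hR1 : (r:ℝ) - 1 = 1 := by rw [hr2']; norm_num
        rw [hR1] at hnum
        have h2s : 2*(s:ℝ) = (q':ℝ)^2 + (q':ℝ) := by linear_combination hnum - hts'
        have hsqrtval : Real.sqrt (2*(s:ℝ)+1/4) = (q':ℝ) + 1/2 := by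
          rw [show 2*(s:ℝ)+1/4 = ((q':ℝ)+1/2)^2 by linear_combination h2s]
          exact Real.sqrt_sq (by positivity)
        rw [hts', hsqrtval]
        ring
      · rintro ⟨hr2', ht2⟩
        have hR1 : (r:ℝ) - 1 = 1 := by rw [hr2']; norm_num
        have hsqrtval : Real.sqrt (2*(s:ℝ)+1/4) = (q':ℝ) + 1/2 := by
          rw [ht2] at hts'
          linarith
        have h2s : 2*(s:ℝ) = (q':ℝ)^2 + (q':ℝ) := by
          have h7 := hsqrtval ▸ hsq
          linear_combination -h7
        rw [hR1, div_one]
        linear_combination h2s + hts'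
end

section
/- Let r ≥ 2 and t ≥ s ≥ 1 be integers with t ≤ s + 1/2 + √(2s + 1/4), set q = t − s, and define the real function f(z) = (s·z − q)·(1+z)^q + (t + (r−2)·s)·z + q. Then f is strictly increasing on [0, +∞), f(0) = 0, and f′(0) = s·r + q − q². -/
lemma bern (a b : ℝ) : ∀ (m : ℕ) (z : ℝ), 0 ≤ z →
    (∀ j : ℕ, j ≤ m → 0 ≤ b + (j : ℝ) * a) →
    a + (b + (m : ℝ) * a) * z ≤ (1 + z) ^ m * (a + b * z) := by
  intro m
  induction m with
  | zero => intro z hz _; simp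
  | succ n ih =>
    intro z hz hj
    have h1 := ih z hz (fun j hjn => hj j (Nat.le_succ_of_le hjn))
    have h4 : 0 ≤ b + (n : ℝ) * a := hj n (Nat.le_succ n)
    have h3 : (1 + z) * (a + (b + (n : ℝ) * a) * z) ≤ (1 + z) * ((1 + z) ^ n * (a + b * z)) :=
      mul_le_mul_of_nonneg_left h1 (by linarith)
    have h2 : (1 + z) ^ (n + 1) * (a + b * z) = (1 + z) * ((1 + z) ^ n * (a + b * z)) := by ring
    push_cast
    nlinarith [mul_nonneg h4 (mul_nonneg hz hz)]

lemma bern_strict (a b : ℝ) (m : ℕ) (z : ℝ) (hz : 0 < z) (hb : 0 < b)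
    (hj : ∀ j : ℕ, j ≤ m → 0 ≤ b + (j : ℝ) * a) : a < (1 + z) ^ m * (a + b * z) := by
  rcases eq_or_lt_of_le (hj m le_rfl) with h | h
  · cases m with
    | zero => simp at h; nlinarith
    | succ n =>
      have h1 := bern a b n z hz.le (fun j hjn => hj j (Nat.le_succ_of_le hjn))
      have ha : a < 0 := by
        by_contra hc
        push_neg at hc
        have : (0:ℝ) < b + (n + 1 : ℕ) * a := by
          have : (0:ℝ) ≤ (n + 1 : ℕ) * a := mul_nonneg (by positivity) hc
          linarith
        linarith [h.symm ▸ this]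
      have hna : b + (n : ℝ) * a = -a := by push_cast at h ⊢; linarith
      have h3 : (1 + z) * (a + (b + (n : ℝ) * a) * z) ≤ (1 + z) * ((1 + z) ^ n * (a + b * z)) :=
        mul_le_mul_of_nonneg_left h1 (by linarith)
      have h2 : (1 + z) ^ (n + 1) * (a + b * z) = (1 + z) * ((1 + z) ^ n * (a + b * z)) := by ring
      rw [h2]
      nlinarith [mul_pos (mul_pos hz hz) (neg_pos.mpr ha)]
  · have h1 := bern a b m z hz.le hj
    nlinarith

set_option maxHeartbeats 1000000 in
theorem statement19 (r s t : ℕ) (hr : 2 ≤ r) (hs : 1 ≤ s) (hst : s ≤ t)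
    (ht : (t : ℝ) ≤ s + 1 / 2 + Real.sqrt (2 * s + 1 / 4))
    (q : ℕ) (hq : q = t - s) (f : ℝ → ℝ)
    (hf : ∀ z : ℝ, f z =
      ((s : ℝ) * z - q) * (1 + z) ^ q + ((t : ℝ) + ((r : ℝ) - 2) * s) * z + q) :
    StrictMonoOn f (Set.Ici (0 : ℝ)) ∧ f 0 = 0 ∧
    deriv f 0 = (s : ℝ) * r + q - (q : ℝ) ^ 2 := by
  have hqc : (q : ℝ) = (t : ℝ) - s := by
    have h : q + s = t := by omega
    have h2 := congrArg (Nat.cast : ℕ → ℝ) h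
    push_cast at h2
    linarith
  have hsr : (1 : ℝ) ≤ s := by exact_mod_cast hs
  have hrr : (2 : ℝ) ≤ r := by exact_mod_cast hr
  have htr : (s : ℝ) ≤ t := by exact_mod_cast hst
  -- key inequality q^2 ≤ 2s + q
  have key : (q : ℝ) ^ 2 ≤ 2 * s + q := by
    rcases Nat.eq_zero_or_pos q with h0 | hpos
    · subst h0; simp
    · have hq1 : (1 : ℝ) ≤ q := by exact_mod_cast hpos
      have h1 : (q : ℝ) - 1 / 2 ≤ Real.sqrt (2 * s + 1 / 4) := by
        rw [hqc]; linarith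
      have h2 : ((q : ℝ) - 1 / 2) * ((q : ℝ) - 1 / 2) ≤
          Real.sqrt (2 * s + 1 / 4) * Real.sqrt (2 * s + 1 / 4) :=
        mul_le_mul h1 h1 (by linarith) (Real.sqrt_nonneg _)
      rw [Real.mul_self_sqrt (by positivity)] at h2
      nlinarith
  -- derivative formula
  have hfe : f = fun z : ℝ =>
      ((s : ℝ) * z - q) * (1 + z) ^ q + ((t : ℝ) + ((r : ℝ) - 2) * s) * z + q :=
    funext hf
  have hderiv : ∀ z : ℝ, HasDerivAt f
      ((s : ℝ) * (1 + z) ^ q + ((s : ℝ) * z - q) * ((q : ℝ) * (1 + z) ^ (q - 1))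
        + ((t : ℝ) + ((r : ℝ) - 2) * s)) z := by
    intro z
    have hid : HasDerivAt (fun z : ℝ => 1 + z) 1 z := by
      simpa using (hasDerivAt_id z).const_add (1 : ℝ)
    have hpow : HasDerivAt (fun z : ℝ => (1 + z) ^ q) ((q : ℝ) * (1 + z) ^ (q - 1) * 1) z :=
      hid.pow q
    have h1 : HasDerivAt (fun z : ℝ => (s : ℝ) * z - q) s z := by
      simpa using ((hasDerivAt_id z).const_mul (s : ℝ)).sub_const (q : ℝ)
    have h2 := h1.mul hpow
    have h3 : HasDerivAt (fun z : ℝ => ((t : ℝ) + ((r : ℝ) - 2) * s) * z)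
        ((t : ℝ) + ((r : ℝ) - 2) * s) z := by
      simpa using (hasDerivAt_id z).const_mul ((t : ℝ) + ((r : ℝ) - 2) * s)
    have h4 := (h2.add h3).add_const (q : ℝ)
    rw [hfe]
    refine h4.congr_deriv ?_
    ring
  have hf0 : f 0 = 0 := by rw [hf]; simp
  have hd0 : deriv f 0 = (s : ℝ) * r + q - (q : ℝ) ^ 2 := by
    rw [(hderiv 0).deriv]
    simp
    nlinarith [hqc]
  refine ⟨?_, hf0, hd0⟩
  have hcont : Continuous f := continuous_iff_continuousAt.mpr fun z => (hderiv z).continuousAt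
  apply strictMonoOn_of_deriv_pos (convex_Ici 0) hcont.continuousOn
  intro z hz
  rw [interior_Ici] at hz
  have hzpos : (0 : ℝ) < z := hz
  rw [(hderiv z).deriv]
  rcases Nat.eq_zero_or_pos q with h0 | hpos
  · subst h0; simp; nlinarith
  · obtain ⟨n, rfl⟩ : ∃ n, q = n + 1 := ⟨q - 1, by omega⟩
    have hn0 : (0 : ℝ) ≤ (n : ℝ) := Nat.cast_nonneg n
    have hq1 : (1 : ℝ) ≤ (n : ℝ) + 1 := by linarith
    obtain ⟨a, ha⟩ : ∃ a : ℝ, a = (s : ℝ) - ((n : ℝ) + 1) ^ 2 := ⟨_, rfl⟩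
    obtain ⟨b, hb⟩ : ∃ b : ℝ, b = ((n : ℝ) + 2) * s := ⟨_, rfl⟩
    have hbpos : 0 < b := by rw [hb]; nlinarith
    have hqn : ((n + 1 : ℕ) : ℝ) = (n : ℝ) + 1 := by push_cast; ring
    have hkey : ((n:ℝ)+1) ^ 2 ≤ 2 * s + ((n:ℝ)+1) := by rw [← hqn]; exact key
    have hkey2 := mul_le_mul_of_nonneg_left hkey hn0
    have hna : 0 ≤ b + (n : ℝ) * a := by
      rw [ha, hb]; nlinarith [hkey2, hkey, hsr]
    have hj : ∀ j : ℕ, j ≤ n → 0 ≤ b + (j : ℝ) * a := by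
      intro j hjle
      have hjr : (j : ℝ) ≤ n := by exact_mod_cast hjle
      have hjnn : (0 : ℝ) ≤ j := by positivity
      rcases le_or_gt 0 a with hapos | haneg
      · nlinarith [mul_nonneg hjnn hapos]
      · nlinarith [mul_le_mul_of_nonneg_right hjr (neg_nonneg.mpr haneg.le), hna]
    have hstrict := bern_strict a b n z hzpos hbpos hj
    have hqc' : ((n : ℝ) + 1) = (t : ℝ) - s := by push_cast at hqc; linarith
    have htn : (t : ℝ) = (s : ℝ) + (n : ℝ) + 1 := by linarith
    have haC : 0 ≤ a + ((t : ℝ) + ((r : ℝ) - 2) * s) := by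
      rw [ha, htn]
      nlinarith [hkey, mul_le_mul_of_nonneg_right hrr (by linarith : (0:ℝ) ≤ s)]
    have heq : (s : ℝ) * (1 + z) ^ (n + 1)
        + ((s : ℝ) * z - ((n + 1 : ℕ) : ℝ)) * (((n + 1 : ℕ) : ℝ) * (1 + z) ^ ((n + 1) - 1))
        + ((t : ℝ) + ((r : ℝ) - 2) * s)
        = (1 + z) ^ n * (a + b * z) + ((t : ℝ) + ((r : ℝ) - 2) * s) := by
      rw [ha, hb]
      simp only [Nat.add_sub_cancel]
      push_cast
      ring
    rw [heq]
    linarith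
end
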